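/- Let I be an ideal on ω such that c_{0,I} is complemented in ℓ∞. Then P(ω)/I admits a strictly positive finitely additive measure; concretely, there is a function μ : P(ω) → [0,∞) with μ(ω) = 1, μ(A) = μ(B) whenever the symmetric difference A Δ B belongs to I, μ(A ∪ B) = μ(A) + μ(B) whenever A ∩ B ∈ I, and μ(A) > 0 if and only if A ∉ I. -/

import Mathlib

open Filter Topology

noncomputable section

abbrev LinfNat := lp (fun _ : ℕ => ℝ) ⊤

/-- `I` is a proper ideal on `ω` containing all finite sets. -/
def IsIdealOmega (I : Set (Set ℕ)) : Prop :=
  (∀ ⦃A B : Set ℕ⦄, A ∈ I → B ⊆ A → B ∈ I) ∧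
  (∀ ⦃A B : Set ℕ⦄, A ∈ I → B ∈ I → A ∪ B ∈ I) ∧
  (∀ A : Set ℕ, A.Finite → A ∈ I) ∧
  (Set.univ : Set ℕ) ∉ I

/-- The set `c_{0,I}` of bounded sequences `I`-converging to `0`. -/
def c0Set (I : Set (Set ℕ)) : Set LinfNat :=
  {x | ∀ ε : ℝ, 0 < ε → {n : ℕ | ε ≤ |x n|} ∈ I}

/-- `c_{0,I}` is complemented in `ℓ∞`: there is a bounded linear projection onto it. -/
def c0Complemented (I : Set (Set ℕ)) : Prop :=
  ∃ P : LinfNat →L[ℝ] LinfNat, (∀ x, P (P x) = P x) ∧ Set.range P = c0Set I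

/-- The compact space `K_I` of ultrafilters extending the dual filter of `I`. -/
def KI (I : Set (Set ℕ)) : Set (Ultrafilter ℕ) := {U | ∀ A ∈ I, Aᶜ ∈ U}

theorem KI_isClosed (I : Set (Set ℕ)) : IsClosed (KI I) := by
  have h : KI I = ⋂ A ∈ I, {U : Ultrafilter ℕ | Aᶜ ∈ U} := by
    ext U; simp [KI]
  rw [h]
  exact isClosed_biInter fun A _ => ultrafilter_isClosed_basic _

instance KI.compactSpace (I : Set (Set ℕ)) : CompactSpace (KI I) :=
  isCompact_iff_compactSpace.mp ((KI_isClosed I).isCompact)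

/-- A compact space is approximable when the closed unit ball of the dual of `C(K)`
is weak*-separable. -/
def Approximable (K : Type*) [TopologicalSpace K] [CompactSpace K] : Prop :=
  TopologicalSpace.IsSeparable
    (StrongDual.toWeakDual ''
      Metric.closedBall (0 : StrongDual ℝ C(K, ℝ)) 1)

end

noncomputable section

noncomputable def indL (A : Set ℕ) : LinfNat :=
  ⟨A.indicator (fun _ => 1), memℓp_infty ⟨1, by
    rintro x ⟨n, rfl⟩
    by_cases hn : n ∈ A <;> simp [Set.indicator, hn]⟩⟩

lemma indL_apply (A : Set ℕ) (n : ℕ) : (indL A) n = A.indicator (fun _ => 1) n := rfl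

lemma indL_empty : indL ∅ = 0 := by
  apply lp.ext; funext n; simp [indL_apply]

lemma indL_add {A B : Set ℕ} (hAB : A ∩ B = ∅) :
    indL (A ∪ B) = indL A + indL B := by
  apply lp.ext; funext n
  have h2 : (indL A + indL B) n = indL A n + indL B n := rfl
  rw [h2]
  simp only [indL_apply]
  by_cases hA : n ∈ A
  · have hB : n ∉ B := fun hB => by
      have : n ∈ A ∩ B := ⟨hA, hB⟩
      simp [hAB] at this
    simp [Set.indicator, hA, hB]
  · by_cases hB : n ∈ B <;> simp [Set.indicator, hA, hB]

lemma norm_indL_le (A : Set ℕ) : ‖indL A‖ ≤ 1 := by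
  apply lp.norm_le_of_forall_le (by norm_num)
  intro n
  rw [indL_apply]
  by_cases hn : n ∈ A <;> simp [Set.indicator, hn]

noncomputable def posVar (f : Set ℕ → ℝ) (A : Set ℕ) : ℝ := sSup (f '' {B | B ⊆ A})

lemma posVar_set_nonempty (f : Set ℕ → ℝ) (A : Set ℕ) : (f '' {B | B ⊆ A}).Nonempty :=
  ⟨f ∅, ∅, by simp⟩

lemma posVar_set_bdd {f : Set ℕ → ℝ} {C : ℝ} (hb : ∀ B, f B ≤ C) (A : Set ℕ) :
    BddAbove (f '' {B | B ⊆ A}) := ⟨C, by rintro x ⟨B, _, rfl⟩; exact hb B⟩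

lemma le_posVar {f : Set ℕ → ℝ} {C : ℝ} (hb : ∀ B, f B ≤ C) {A B : Set ℕ} (hBA : B ⊆ A) :
    f B ≤ posVar f A :=
  le_csSup (posVar_set_bdd hb A) ⟨B, hBA, rfl⟩

lemma posVar_le {f : Set ℕ → ℝ} {A : Set ℕ} {c : ℝ} (h : ∀ B ⊆ A, f B ≤ c) :
    posVar f A ≤ c :=
  csSup_le (posVar_set_nonempty f A) (by rintro x ⟨B, hB, rfl⟩; exact h B hB)

lemma posVar_nonneg {f : Set ℕ → ℝ} {C : ℝ} (hb : ∀ B, f B ≤ C) (h0 : f ∅ = 0) (A : Set ℕ) :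
    0 ≤ posVar f A := h0 ▸ le_posVar hb (Set.empty_subset A)

lemma posVar_add {f : Set ℕ → ℝ} {C : ℝ} (hb : ∀ B, f B ≤ C)
    (hadd : ∀ A B : Set ℕ, A ∩ B = ∅ → f (A ∪ B) = f A + f B)
    {A B : Set ℕ} (hAB : A ∩ B = ∅) :
    posVar f (A ∪ B) = posVar f A + posVar f B := by
  have split : ∀ D : Set ℕ, D ⊆ A ∪ B → f D = f (D ∩ A) + f (D ∩ B) := by
    intro D hD
    have h1 : (D ∩ A) ∩ (D ∩ B) = ∅ := by
      rw [Set.eq_empty_iff_forall_notMem]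
      rintro x ⟨⟨_, hA⟩, ⟨_, hB⟩⟩
      have : x ∈ A ∩ B := ⟨hA, hB⟩
      simp [hAB] at this
    have h2 : D ∩ A ∪ D ∩ B = D := by
      rw [← Set.inter_union_distrib_left, Set.inter_eq_left.2 hD]
    rw [← hadd _ _ h1, h2]
  apply le_antisymm
  · apply posVar_le
    intro D hD
    rw [split D hD]
    have := le_posVar hb (Set.inter_subset_right : D ∩ A ⊆ A)
    have := le_posVar hb (Set.inter_subset_right : D ∩ B ⊆ B)
    linarith
  · have h1 : posVar f A ≤ posVar f (A ∪ B) - posVar f B := by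
      apply posVar_le
      intro C₁ hC₁
      have h2 : posVar f B ≤ posVar f (A ∪ B) - f C₁ := by
        apply posVar_le
        intro C₂ hC₂
        have hdisj : C₁ ∩ C₂ = ∅ := by
          rw [Set.eq_empty_iff_forall_notMem]
          rintro x ⟨h1, h2⟩
          have : x ∈ A ∩ B := ⟨hC₁ h1, hC₂ h2⟩
          simp [hAB] at this
        have hsub : C₁ ∪ C₂ ⊆ A ∪ B := Set.union_subset_union hC₁ hC₂
        have := le_posVar hb hsub
        rw [hadd _ _ hdisj] at this
        linarith
      linarith
    linarith

end

set_option maxHeartbeats 2000000 in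
/-- If `c_{0,I}` is complemented in `ℓ∞` then `P(ω)/I` admits a strictly positive
finitely additive measure. -/
theorem strictly_positive_measure_of_complemented (I : Set (Set ℕ))
    (hI : IsIdealOmega I) (h : c0Complemented I) :
    ∃ μ : Set ℕ → ℝ,
      (∀ A : Set ℕ, 0 ≤ μ A) ∧
      μ Set.univ = 1 ∧
      (∀ A B : Set ℕ, (A \ B) ∪ (B \ A) ∈ I → μ A = μ B) ∧
      (∀ A B : Set ℕ, A ∩ B ∈ I → μ (A ∪ B) = μ A + μ B) ∧
      (∀ A : Set ℕ, 0 < μ A ↔ A ∉ I) := by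
  obtain ⟨hsub, hun, hfin, huniv⟩ := hI
  obtain ⟨P, hPP, hPr⟩ := h
  set T : LinfNat →L[ℝ] LinfNat := ContinuousLinearMap.id ℝ LinfNat - P with hTdef
  have hTapp : ∀ x : LinfNat, T x = x - P x := by
    intro x
    rw [hTdef, ContinuousLinearMap.sub_apply, ContinuousLinearMap.id_apply]
  have hT0 : ∀ x ∈ c0Set I, T x = 0 := by
    intro x hx
    rw [← hPr] at hx
    obtain ⟨y, rfl⟩ := hx
    rw [hTapp, hPP y, sub_self]
  have hind_mem : ∀ A ∈ I, indL A ∈ c0Set I := by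
    intro A hA ε hε
    apply hsub hA
    intro n hn
    simp only [Set.mem_setOf_eq, indL_apply] at hn
    by_contra hnA
    rw [Set.indicator_of_notMem hnA] at hn
    simp at hn; linarith
  have hind_not : ∀ A : Set ℕ, A ∉ I → indL A ∉ c0Set I := by
    intro A hA hmem
    apply hA
    have h1 := hmem 1 one_pos
    have h2 : {n : ℕ | (1:ℝ) ≤ |(indL A) n|} = A := by
      ext n
      simp only [Set.mem_setOf_eq, indL_apply]
      by_cases hn : n ∈ A <;> simp [Set.indicator, hn]
    rwa [h2] at h1
  set m : ℕ → Set ℕ → ℝ := fun n A => (T (indL A)) n with hmdef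
  have hmb : ∀ n B, |m n B| ≤ ‖T‖ := by
    intro n B
    calc |m n B| = ‖(T (indL B)) n‖ := (Real.norm_eq_abs _).symm
    _ ≤ ‖T (indL B)‖ := lp.norm_apply_le_norm ENNReal.top_ne_zero _ n
    _ ≤ ‖T‖ * ‖indL B‖ := T.le_opNorm _
    _ ≤ ‖T‖ * 1 := mul_le_mul_of_nonneg_left (norm_indL_le B) (norm_nonneg T)
    _ = ‖T‖ := mul_one _
  have hb1 : ∀ n B, m n B ≤ ‖T‖ := fun n B => (abs_le.mp (hmb n B)).2
  have hb2 : ∀ n B, -(m n B) ≤ ‖T‖ := fun n B => by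
    have := (abs_le.mp (hmb n B)).1; linarith
  have hm0 : ∀ n, m n ∅ = 0 := by
    intro n
    show (T (indL ∅)) n = 0
    rw [indL_empty, map_zero, lp.coeFn_zero]
    rfl
  have hmadd : ∀ n (A B : Set ℕ), A ∩ B = ∅ → m n (A ∪ B) = m n A + m n B := by
    intro n A B hAB
    show (T (indL (A ∪ B))) n = (T (indL A)) n + (T (indL B)) n
    rw [indL_add hAB, map_add, lp.coeFn_add]
    rfl
  have hmI : ∀ n, ∀ A ∈ I, m n A = 0 := by
    intro n A hA
    show (T (indL A)) n = 0
    rw [hT0 _ (hind_mem A hA), lp.coeFn_zero]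
    rfl
  set ν : ℕ → Set ℕ → ℝ :=
    fun n A => posVar (m n) A + posVar (fun B => -(m n B)) A with hνdef
  have hmadd' : ∀ n (A B : Set ℕ), A ∩ B = ∅ →
      (fun B => -(m n B)) (A ∪ B) = (fun B => -(m n B)) A + (fun B => -(m n B)) B := by
    intro n A B hAB; simp only [hmadd n A B hAB]; ring
  have hν0 : ∀ n A, 0 ≤ ν n A := by
    intro n A
    have := posVar_nonneg (hb1 n) (hm0 n) A
    have := posVar_nonneg (hb2 n) (by simp [hm0 n]) A
    simp only [hνdef]; linarith
  have hνb : ∀ n A, ν n A ≤ 2 * ‖T‖ := by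
    intro n A
    have h1 : posVar (m n) A ≤ ‖T‖ := posVar_le (fun B _ => hb1 n B)
    have h2 : posVar (fun B => -(m n B)) A ≤ ‖T‖ := posVar_le (fun B _ => hb2 n B)
    simp only [hνdef]; linarith
  have hνadd : ∀ n (A B : Set ℕ), A ∩ B = ∅ → ν n (A ∪ B) = ν n A + ν n B := by
    intro n A B hAB
    simp only [hνdef]
    rw [posVar_add (hb1 n) (hmadd n) hAB, posVar_add (hb2 n) (hmadd' n) hAB]
    ring
  have hνI : ∀ n, ∀ A ∈ I, ν n A = 0 := by
    intro n A hA
    have h1 : posVar (m n) A ≤ 0 := posVar_le (fun B hB => le_of_eq (hmI n B (hsub hA hB)))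
    have h2 : posVar (fun B => -(m n B)) A ≤ 0 :=
      posVar_le (fun B hB => by simp [hmI n B (hsub hA hB)])
    have h3 := posVar_nonneg (hb1 n) (hm0 n) A
    have h4 := posVar_nonneg (hb2 n) (by simp [hm0 n]) A
    simp only [hνdef]; linarith
  have hνpos : ∀ A : Set ℕ, A ∉ I → ∃ n, 0 < ν n A := by
    intro A hA
    have hTne : T (indL A) ≠ 0 := by
      intro h0
      apply hind_not A hA
      rw [← hPr]
      have h1 : indL A - P (indL A) = 0 := by rw [← hTapp]; exact h0
      exact ⟨indL A, (sub_eq_zero.mp h1).symm⟩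
    have hn : ∃ n, m n A ≠ 0 := by
      by_contra hc
      push_neg at hc
      apply hTne
      apply lp.ext
      funext n
      exact hc n
    obtain ⟨n, hn⟩ := hn
    refine ⟨n, ?_⟩
    have h1 : m n A ≤ posVar (m n) A := le_posVar (hb1 n) (le_refl A)
    have h2 : -(m n A) ≤ posVar (fun B => -(m n B)) A := le_posVar (hb2 n) (le_refl A)
    have h3 := posVar_nonneg (hb1 n) (hm0 n) A
    have h4 := posVar_nonneg (hb2 n) (by simp [hm0 n]) A
    rcases lt_or_gt_of_ne hn with hlt | hgt
    · simp only [hνdef]; linarith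
    · simp only [hνdef]; linarith
  -- the unnormalized measure
  set μ0 : Set ℕ → ℝ := fun A => ∑' n, (1/2 : ℝ)^n * ν n A with hμ0def
  have hsummable : ∀ A, Summable (fun n => (1/2 : ℝ)^n * ν n A) := by
    intro A
    apply Summable.of_nonneg_of_le
      (fun n => mul_nonneg (by positivity) (hν0 n A))
      (fun n => mul_le_mul_of_nonneg_left (hνb n A) (by positivity))
    exact summable_geometric_two.mul_right _
  have hμ0nonneg : ∀ A, 0 ≤ μ0 A :=
    fun A => tsum_nonneg fun n => mul_nonneg (by positivity) (hν0 n A)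
  have hμ0I : ∀ A ∈ I, μ0 A = 0 := by
    intro A hA
    simp only [hμ0def]
    have : (fun n => (1/2 : ℝ)^n * ν n A) = fun _ => 0 := by
      funext n; rw [hνI n A hA, mul_zero]
    rw [this, tsum_zero]
  have hμ0pos : ∀ A : Set ℕ, A ∉ I → 0 < μ0 A := by
    intro A hA
    obtain ⟨n, hn⟩ := hνpos A hA
    have h1 : (0:ℝ) < (1/2 : ℝ)^n * ν n A := mul_pos (by positivity) hn
    have h2 : (1/2 : ℝ)^n * ν n A ≤ μ0 A :=
      Summable.le_tsum (hsummable A) n fun j _ => mul_nonneg (by positivity) (hν0 j A)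
    linarith
  have hμ0add : ∀ A B : Set ℕ, A ∩ B = ∅ → μ0 (A ∪ B) = μ0 A + μ0 B := by
    intro A B hAB
    simp only [hμ0def]
    have : (fun n => (1/2 : ℝ)^n * ν n (A ∪ B)) =
        fun n => (1/2 : ℝ)^n * ν n A + (1/2 : ℝ)^n * ν n B := by
      funext n; rw [hνadd n A B hAB]; ring
    rw [this, Summable.tsum_add (hsummable A) (hsummable B)]
  -- symmetric difference invariance for μ0
  have hμ0diffnull : ∀ A B : Set ℕ, A \ B ∈ I → μ0 A = μ0 (A ∩ B) := by
    intro A B hD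
    have hsplit : (A ∩ B) ∪ (A \ B) = A := Set.inter_union_diff A B
    have hdisj : (A ∩ B) ∩ (A \ B) = ∅ := by
      ext x; simp only [Set.mem_inter_iff, Set.mem_diff, Set.mem_empty_iff_false, iff_false]
      tauto
    have := hμ0add (A ∩ B) (A \ B) hdisj
    rw [hsplit] at this
    rw [this, hμ0I _ hD, add_zero]
  set c : ℝ := μ0 Set.univ with hc
  have hcpos : 0 < c := hμ0pos Set.univ huniv
  refine ⟨fun A => μ0 A / c, ?_, ?_, ?_, ?_, ?_⟩
  · intro A
    exact div_nonneg (hμ0nonneg A) hcpos.le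
  · exact div_self hcpos.ne'
  · intro A B hABI
    have hA : A \ B ∈ I := hsub hABI Set.subset_union_left
    have hB : B \ A ∈ I := hsub hABI Set.subset_union_right
    have h1 := hμ0diffnull A B hA
    have h2 := hμ0diffnull B A hB
    rw [Set.inter_comm B A] at h2
    show μ0 A / c = μ0 B / c
    rw [h1, h2]
  · intro A B hABI
    have h1 : A ∪ B = (A \ B) ∪ B := (Set.diff_union_self).symm
    have h2 : (A \ B) ∩ B = ∅ := by
      ext x; simp only [Set.mem_inter_iff, Set.mem_diff, Set.mem_empty_iff_false, iff_false]
      tauto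
    have h3 : μ0 (A ∪ B) = μ0 (A \ B) + μ0 B := by rw [h1]; exact hμ0add _ _ h2
    have h4 : μ0 A = μ0 (A \ B) := by
      have h5 : (A ∩ B) ∪ (A \ B) = A := Set.inter_union_diff A B
      have h6 : (A ∩ B) ∩ (A \ B) = ∅ := by
        ext x; simp only [Set.mem_inter_iff, Set.mem_diff, Set.mem_empty_iff_false, iff_false]
        tauto
      have := hμ0add (A ∩ B) (A \ B) h6
      rw [h5] at this
      rw [this, hμ0I _ hABI, zero_add]
    show μ0 (A ∪ B) / c = μ0 A / c + μ0 B / c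
    rw [h3, h4, add_div]
  · intro A
    constructor
    · intro hpos hA
      have hpos' : 0 < μ0 A / c := hpos
      rw [hμ0I A hA] at hpos'
      simp at hpos'
    · intro hA
      exact div_pos (hμ0pos A hA) hcpos
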